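/- arXiv:1403.4330 — 2 statements merged into one kernel-verified Lean document; each statement's English description precedes it below -/
import Mathlib

section
/- Let A ∈ ℝ^{n×n}, B ∈ ℝ^{n×m}, H ∈ ℝ^{q×m}, K ∈ ℝ^{m×n}. If H has full column rank and A + BK is Hurwitz, then for every ω ∈ ℝ the complex (n+q)×(n+m) matrix [[A − iωI_n, B],[−HK, H]] has full column rank n+m. -/
open Matrix

/-- A real square matrix is Hurwitz if its (complex) spectrum lies in the open left half
plane. -/
def IsHurwitz {t : Type*} [Fintype t] [DecidableEq t] (M : Matrix t t ℝ) : Prop :=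
  ∀ z ∈ spectrum ℂ (M.map Complex.ofReal), z.re < 0

/-- A real matrix with full column rank has trivial complex kernel. -/
lemma aux_map_mulVec_eq_zero {q m : ℕ} (H : Matrix (Fin q) (Fin m) ℝ) (hH : H.rank = m)
    (u : Fin m → ℂ) (hu : (H.map Complex.ofReal).mulVec u = 0) : u = 0 := by
  -- real kernel is trivial
  have hker : LinearMap.ker H.mulVecLin = ⊥ := by
    have h1 := LinearMap.finrank_range_add_finrank_ker H.mulVecLin
    rw [Module.finrank_pi] at h1
    have h2 : Module.finrank ℝ (LinearMap.range H.mulVecLin) = m := hH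
    have h3 : Module.finrank ℝ (LinearMap.ker H.mulVecLin) = 0 := by
      simp [Fintype.card_fin] at h1; omega
    exact Submodule.finrank_eq_zero.mp h3
  have hre : ∀ w : Fin m → ℝ, H.mulVec w = 0 → w = 0 := by
    intro w hw
    have : w ∈ LinearMap.ker H.mulVecLin := hw
    simpa [hker] using this
  have hreu : H.mulVec (fun j => (u j).re) = 0 ∧ H.mulVec (fun j => (u j).im) = 0 := by
    constructor <;> (funext i) <;> have := congrFun hu i <;>
      simp only [mulVec, dotProduct, map_apply, Pi.zero_apply] at this ⊢
    · have := congrArg Complex.re this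
      simpa [Complex.re_sum, Complex.re_ofReal_mul] using this
    · have := congrArg Complex.im this
      simpa [Complex.im_sum, Complex.im_ofReal_mul] using this
  have h1 := hre _ hreu.1
  have h2 := hre _ hreu.2
  funext j
  have e1 := congrFun h1 j
  have e2 := congrFun h2 j
  exact Complex.ext (by simpa using e1) (by simpa using e2)

/-- If `H` has full column rank and `A + BK` is Hurwitz, then for every `ω ∈ ℝ` the
complex `(n+q)×(n+m)` matrix `[[A − iωI, B], [−HK, H]]` has full column rank `n+m`. -/
theorem stmt1 {n m q : ℕ} (A : Matrix (Fin n) (Fin n) ℝ) (B : Matrix (Fin n) (Fin m) ℝ)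
    (H : Matrix (Fin q) (Fin m) ℝ) (K : Matrix (Fin m) (Fin n) ℝ)
    (hH : H.rank = m) (hHur : IsHurwitz (A + B * K)) (ω : ℝ) :
    (Matrix.fromBlocks
      (A.map Complex.ofReal - (Complex.I * (ω : ℂ)) • 1) (B.map Complex.ofReal)
      (-(H.map Complex.ofReal * K.map Complex.ofReal)) (H.map Complex.ofReal)).rank
      = n + m := by
  set A' := A.map Complex.ofReal
  set B' := B.map Complex.ofReal
  set H' := H.map Complex.ofReal
  set K' := K.map Complex.ofReal
  set C : Matrix (Fin n) (Fin n) ℂ := (Complex.I * (ω : ℂ)) • 1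
  set M := Matrix.fromBlocks (A' - C) B' (-(H' * K')) H' with hM
  -- iω is not in the spectrum, so (A+BK).map ofReal - C is a unit
  have hspec : Complex.I * (ω : ℂ) ∉ spectrum ℂ ((A + B * K).map Complex.ofReal) := by
    intro hmem
    have := hHur _ hmem
    simp at this
  have hunit : IsUnit (C - (A + B * K).map Complex.ofReal) := by
    have := spectrum.notMem_iff.mp hspec
    rwa [Algebra.algebraMap_eq_smul_one] at this
  have hmapeq : (A + B * K).map Complex.ofReal = A' + B' * K' := by
    have : (A + B * K).map Complex.ofRealHom = A.map Complex.ofRealHom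
        + B.map Complex.ofRealHom * K.map Complex.ofRealHom := by
      rw [Matrix.map_add _ (map_add Complex.ofRealHom), Matrix.map_mul]
    exact this
  -- kernel of mulVecLin of M is trivial
  have hinj : Function.Injective M.mulVecLin := by
    rw [← LinearMap.ker_eq_bot, eq_bot_iff]
    intro v hv
    have hv' : M.mulVec v = 0 := hv
    set x : Fin n → ℂ := v ∘ Sum.inl
    set u : Fin m → ℂ := v ∘ Sum.inr
    have hvel : v = Sum.elim x u := by funext i; cases i <;> rfl
    rw [hvel, hM, fromBlocks_mulVec] at hv'
    have eq1 : (A' - C).mulVec x + B'.mulVec u = 0 := by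
      funext i; exact congrFun hv' (Sum.inl i)
    have eq2 : (-(H' * K')).mulVec x + H'.mulVec u = 0 := by
      funext i; exact congrFun hv' (Sum.inr i)
    -- From eq2: u = K' *ᵥ x
    have hu : u = K'.mulVec x := by
      have h0 : H'.mulVec (u - K'.mulVec x) = 0 := by
        rw [mulVec_sub]
        rw [neg_mulVec, ← mulVec_mulVec] at eq2
        linear_combination (norm := abel) eq2
      have := aux_map_mulVec_eq_zero H hH _ h0
      have := sub_eq_zero.mp this
      exact this
    -- From eq1: ((A' + B'K') - C) *ᵥ x = 0
    have hx0 : ((A' + B' * K') - C).mulVec x = 0 := by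
      rw [sub_mulVec] at eq1
      rw [sub_mulVec, add_mulVec, ← mulVec_mulVec, ← hu]
      linear_combination (norm := abel) eq1
    have hx : x = 0 := by
      have hunit' : IsUnit ((A' + B' * K') - C) := by
        rw [← hmapeq]
        simpa using hunit.neg
      exact (mulVec_injective_iff_isUnit.mpr hunit') (by simpa using hx0)
    have hu0 : u = 0 := by rw [hu, hx, mulVec_zero]
    have : v = 0 := by rw [hvel, hx, hu0]; funext i; cases i <;> rfl
    simp [this]
  -- rank-nullity
  have hker : LinearMap.ker M.mulVecLin = ⊥ := LinearMap.ker_eq_bot.mpr hinj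
  have h1 := LinearMap.finrank_range_add_finrank_ker M.mulVecLin
  rw [hker, finrank_bot, Module.finrank_pi] at h1
  simpa [Matrix.rank] using h1
end

section
/- Let K_i ∈ ℝ^{(m_i+…+m_N)×n} and L_i ∈ ℝ^{n×(p_1+…+p_i)} (i = 1,…,N) be arbitrary gains. Then the matrix μ̄𝒜ζ̄ is block upper triangular with diagonal blocks A^{KL}_{k,k−1}: for all block indices 1 ≤ l < k ≤ N+1, the (k,l) n×n block of μ̄𝒜ζ̄ is zero, and for every k ∈ {1,…,N+1} the (k,k) n×n block of μ̄𝒜ζ̄ equals A^{KL}_{k,k−1}. -/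
open Matrix


namespace TriAux

variable {R : Type*} [Ring R] {M₀ : Type*} [AddCommMonoid M₀]

lemma sum_ite_val {t : ℕ} (v : ℕ) (f : Fin t → M₀) :
    (∑ l : Fin t, if l.1 = v then f l else 0) = if h : v < t then f ⟨v, h⟩ else 0 := by
  split
  · next h =>
    rw [Finset.sum_eq_single ⟨v, h⟩]
    · simp
    · intro b _ hb
      rw [if_neg]
      exact fun hv => hb (Fin.ext hv)
    · simp
  · next h =>
    apply Finset.sum_eq_zero
    intro l _
    rw [if_neg]
    exact fun hv => h (hv ▸ l.2)

lemma sum_ite_eq_univ {t : ℕ} (j : Fin t) (f : Fin t → M₀) :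
    (∑ l : Fin t, if l = j then f l else 0) = f j := by
  simp

lemma telescope {G : Type*} [AddCommGroup G] (g : ℕ → G) (a : ℕ) :
    ∀ b, a ≤ b → (∑ m ∈ Finset.Ico a b, (g m - g (m + 1))) = g a - g b := by
  intro b
  induction b with
  | zero => intro h; interval_cases a; simp
  | succ b ih =>
    intro h
    rcases Nat.lt_or_ge a (b + 1) with h1 | h1
    · have h2 : a ≤ b := by omega
      rw [Finset.sum_Ico_succ_top h2, ih h2]
      abel
    · have h2 : a = b + 1 := by omega
      subst h2
      simp

/-- block incidence matrix -/
def Zm (R : Type*) [Zero R] [One R] (t : ℕ) : Matrix (Fin t) (Fin t) R :=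
  Matrix.of fun i j => if j ≤ i then 1 else 0

/-- its inverse -/
def Mm (R : Type*) [Zero R] [One R] [Sub R] (t : ℕ) : Matrix (Fin t) (Fin t) R :=
  Matrix.of fun i j => (if i = j then 1 else 0) - (if i.1 = j.1 + 1 then 1 else 0)

lemma mul_Mm {t : ℕ} (f : Fin t → R) (j : Fin t) :
    (∑ l, f l * Mm R t l j) = f j - (if h : j.1 + 1 < t then f ⟨j.1 + 1, h⟩ else 0) := by
  simp only [Mm, Matrix.of_apply, mul_sub, mul_ite, mul_one, mul_zero]
  rw [Finset.sum_sub_distrib, sum_ite_eq_univ, sum_ite_val]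

lemma Mm_mul {t : ℕ} (f : Fin t → R) (k : Fin t) :
    (∑ l, Mm R t k l * f l) =
      f k - (if 0 < k.1 then f ⟨k.1 - 1, lt_of_le_of_lt (Nat.sub_le _ _) k.2⟩ else 0) := by
  simp only [Mm, Matrix.of_apply, sub_mul, ite_mul, one_mul, zero_mul]
  rw [Finset.sum_sub_distrib]
  congr 1
  · rw [← sum_ite_eq_univ k fun l => f l]
    exact Finset.sum_congr rfl fun l _ => if_congr eq_comm rfl rfl
  · by_cases hk : 0 < k.1
    · have h2 : k.1 - 1 < t := lt_of_le_of_lt (Nat.sub_le _ _) k.2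
      have hs := sum_ite_val (M₀ := R) (t := t) (k.1 - 1) f
      rw [dif_pos h2] at hs
      rw [if_pos hk, ← hs]
      apply Finset.sum_congr rfl
      intro l _
      exact if_congr (by omega) rfl rfl
    · rw [if_neg hk]
      apply Finset.sum_eq_zero
      intro l _
      rw [if_neg]
      omega

lemma Zm_mul_Mm (t : ℕ) : Zm R t * Mm R t = 1 := by
  ext i j
  rw [Matrix.mul_apply, mul_Mm (f := fun l => Zm R t i l)]
  simp only [Zm, Matrix.of_apply, Matrix.one_apply, Fin.le_def, Fin.ext_iff]
  split_ifs <;> first | (exfalso; omega) | simp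

lemma Z_dg_M {t : ℕ} (f : Fin t → R) (i j : Fin t) :
    (Zm R t * (Matrix.of fun a b => if a = b then f a else 0) * Mm R t) i j =
      (if j ≤ i then f j else 0) -
        (if h : j.1 + 1 < t then (if j.1 + 1 ≤ i.1 then f ⟨j.1 + 1, h⟩ else 0) else 0) := by
  rw [Matrix.mul_apply]
  have h1 : ∀ l, (Zm R t * Matrix.of fun a b => if a = b then f a else 0) i l =
      if l ≤ i then f l else 0 := by
    intro l
    rw [Matrix.mul_apply]
    simp only [Zm, Matrix.of_apply, ite_mul, one_mul, zero_mul]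
    rw [← sum_ite_eq_univ l (fun x => if x ≤ i then f x else 0)]
    apply Finset.sum_congr rfl
    intro x _
    split_ifs <;> first | rfl | (exfalso; tauto)
  rw [Finset.sum_congr rfl (fun l _ => by rw [h1 l]),
    mul_Mm (f := fun l => if l ≤ i then f l else 0) j]
  congr 1

end TriAux

namespace TriLQG

noncomputable section

variable {N : ℕ}

/-- Index type of an `(N+1)`-block partitioned coordinate space with block sizes `d`. -/
abbrev Idx {N : ℕ} (d : Fin (N+1) → ℕ) : Type := Σ k : Fin (N+1), Fin (d k)

/-- Indices belonging to blocks `i, i+1, …, N`. -/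
abbrev IdxGe {N : ℕ} (d : Fin (N+1) → ℕ) (i : Fin (N+1)) : Type := {x : Idx d // i ≤ x.1}

/-- Indices belonging to blocks `0, 1, …, i`. -/
abbrev IdxLe {N : ℕ} (d : Fin (N+1) → ℕ) (i : Fin (N+1)) : Type := {x : Idx d // x.1 ≤ i}

/-- The selector matrix `E^{↓i}` (columns of the identity for blocks `i,…,N`). -/
def padGe (d : Fin (N+1) → ℕ) (i : Fin (N+1)) : Matrix (Idx d) (IdxGe d i) ℝ :=
  Matrix.of fun r c => if r = (c : Idx d) then 1 else 0

/-- The selector matrix `E^{↑i}` (columns of the identity for blocks `0,…,i`). -/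
def padLe (d : Fin (N+1) → ℕ) (i : Fin (N+1)) : Matrix (Idx d) (IdxLe d i) ℝ :=
  Matrix.of fun r c => if r = (c : Idx d) then 1 else 0

/-- Complexification of a real matrix. -/
def mc {α β : Type*} (M : Matrix α β ℝ) : Matrix α β ℂ := M.map Complex.ofReal

/-- A real square matrix is Hurwitz if its (complex) spectrum lies in the open left half plane. -/
def IsHurwitz {t : Type*} [Fintype t] [DecidableEq t] (M : Matrix t t ℝ) : Prop :=
  ∀ z ∈ spectrum ℂ (mc M), z.re < 0

open Classical in
/-- The (unique, symmetric, positive semidefinite) square root of a positive semidefinite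
real matrix; junk value `0` if the matrix is not positive semidefinite. -/
def msqrt {t : Type*} [Fintype t] [DecidableEq t] (M : Matrix t t ℝ) : Matrix t t ℝ :=
  if h : M.PosSemidef then
    h.1.eigenvectorUnitary.1 * diagonal ((RCLike.ofReal : ℝ → ℝ) ∘ (√·) ∘ h.1.eigenvalues) *
      (star h.1.eigenvectorUnitary : Matrix t t ℝ)
  else 0

/-- Full column rank. -/
def FullColRank {α β : Type*} [Fintype β] {R : Type*} [CommRing R] (M : Matrix α β R) : Prop :=
  M.rank = Fintype.card β

/-- Full row rank. -/
def FullRowRank {α β : Type*} [Fintype α] [Fintype β] {R : Type*} [CommRing R]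
    (M : Matrix α β R) : Prop :=
  M.rank = Fintype.card α

/-- `ARE_p(Ã,B̃,F̃,H̃)` together with its gain: `X` is a symmetric solution of the
control algebraic Riccati equation and `K` is the associated gain. -/
def AREp {n' m' q' : Type*} [Fintype n'] [Fintype m'] [Fintype q'] [DecidableEq m']
    (At : Matrix n' n' ℝ) (Bt : Matrix n' m' ℝ) (Ft : Matrix q' n' ℝ) (Ht : Matrix q' m' ℝ)
    (X : Matrix n' n' ℝ) (K : Matrix m' n' ℝ) : Prop :=
  X.IsSymm ∧
  Atᵀ * X + X * At - (X * Bt + Ftᵀ * Ht) * (Htᵀ * Ht)⁻¹ * (X * Bt + Ftᵀ * Ht)ᵀ + Ftᵀ * Ft = 0 ∧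
  K = -((Htᵀ * Ht)⁻¹ * (X * Bt + Ftᵀ * Ht)ᵀ)

/-- `ARE_d(Ã,C̃,W̃,Ṽ)` together with its gain. -/
def AREd {n' p' r' : Type*} [Fintype n'] [Fintype p'] [Fintype r'] [DecidableEq p']
    (At : Matrix n' n' ℝ) (Ct : Matrix p' n' ℝ) (Wt : Matrix n' r' ℝ) (Vt : Matrix p' r' ℝ)
    (Y : Matrix n' n' ℝ) (L : Matrix n' p' ℝ) : Prop :=
  Y.IsSymm ∧
  At * Y + Y * Atᵀ - (Ct * Y + Vt * Wtᵀ)ᵀ * (Vt * Vtᵀ)⁻¹ * (Ct * Y + Vt * Wtᵀ) + Wt * Wtᵀ = 0 ∧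
  L = -((Ct * Y + Vt * Wtᵀ)ᵀ * (Vt * Vtᵀ)⁻¹)

/-- Lower block triangular sparsity. -/
def IsLBT {N : ℕ} {d e : Fin (N+1) → ℕ} (M : Matrix (Idx d) (Idx e) ℝ) : Prop :=
  ∀ a : Idx d, ∀ b : Idx e, a.1 < b.1 → M a b = 0

/-- The data of the `(N+1)`-player triangular plant. -/
structure Plant (N : ℕ) where
  nd : Fin (N+1) → ℕ
  md : Fin (N+1) → ℕ
  pd : Fin (N+1) → ℕ
  q : ℕ
  r : ℕ
  A : Matrix (Idx nd) (Idx nd) ℝ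
  B : Matrix (Idx nd) (Idx md) ℝ
  C : Matrix (Idx pd) (Idx nd) ℝ
  F : Matrix (Fin q) (Idx nd) ℝ
  H : Matrix (Fin q) (Idx md) ℝ
  W : Matrix (Idx nd) (Fin r) ℝ
  V : Matrix (Idx pd) (Fin r) ℝ

variable (P : Plant N)

/-- family of controller gains `K_i ∈ ℝ^{(m_i+⋯+m_N)×n}` -/
abbrev KGains (P : Plant N) : Type := (i : Fin (N+1)) → Matrix (IdxGe P.md i) (Idx P.nd) ℝ

/-- family of observer gains `L_i ∈ ℝ^{n×(p_1+⋯+p_i)}` -/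
abbrev LGains (P : Plant N) : Type := (i : Fin (N+1)) → Matrix (Idx P.nd) (IdxLe P.pd i) ℝ

/-- family of symmetric matrices `X_i` (or `Y_i`) -/
abbrev SFam (P : Plant N) : Type := Fin (N+1) → Matrix (Idx P.nd) (Idx P.nd) ℝ

def Bdown (i : Fin (N+1)) : Matrix (Idx P.nd) (IdxGe P.md i) ℝ := P.B.submatrix id Subtype.val
def Hdown (i : Fin (N+1)) : Matrix (Fin P.q) (IdxGe P.md i) ℝ := P.H.submatrix id Subtype.val
def Cup (i : Fin (N+1)) : Matrix (IdxLe P.pd i) (Idx P.nd) ℝ := P.C.submatrix Subtype.val id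
def Vup (i : Fin (N+1)) : Matrix (IdxLe P.pd i) (Fin P.r) ℝ := P.V.submatrix Subtype.val id

/-- `Ψ_{↓i}^{↓i} = (H^{↓i})ᵀ H^{↓i}` -/
def Psidd (i : Fin (N+1)) : Matrix (IdxGe P.md i) (IdxGe P.md i) ℝ := (Hdown P i)ᵀ * Hdown P i

/-- `Φ_{↑j}^{↑j} = V_{↑j} (V_{↑j})ᵀ` -/
def Phiuu (j : Fin (N+1)) : Matrix (IdxLe P.pd j) (IdxLe P.pd j) ℝ := Vup P j * (Vup P j)ᵀ

/-- The coupled Riccati system (2a)–(2d) of the paper. -/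
def Coupled (X : SFam P) (K : KGains P) (Y : SFam P) (L : LGains P) : Prop :=
  AREp P.A (Bdown P 0) P.F (Hdown P 0) (X 0) (K 0) ∧
  (∀ t : Fin N,
    AREp (P.A + L t.castSucc * Cup P t.castSucc) (Bdown P t.succ)
      (-(Hdown P t.castSucc * K t.castSucc)) (Hdown P t.succ) (X t.succ) (K t.succ)) ∧
  AREd P.A (Cup P (Fin.last N)) P.W (Vup P (Fin.last N)) (Y (Fin.last N)) (L (Fin.last N)) ∧
  (∀ t : Fin N,
    AREd (P.A + Bdown P t.succ * K t.succ) (Cup P t.castSucc)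
      (-(L t.succ * Vup P t.succ)) (Vup P t.castSucc) (Y t.castSucc) (L t.castSucc))

/-- `A^{KL}_{k+1,k}` for `k = 0, 1, …, N+1` (`k = 0` gives `A+BK_1`,
`k = N+1` gives `A+L_N C`). -/
def AKL (K : KGains P) (L : LGains P) (k : Fin (N+2)) : Matrix (Idx P.nd) (Idx P.nd) ℝ :=
  if hk : k.1 < N + 1 then
    (if k.1 = 0 then P.A + Bdown P 0 * K 0
     else
       have h1 : k.1 - 1 < N + 1 := by omega
       P.A + Bdown P ⟨k.1, hk⟩ * K ⟨k.1, hk⟩ +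
         L ⟨k.1 - 1, h1⟩ * Cup P ⟨k.1 - 1, h1⟩)
  else P.A + L (Fin.last N) * Cup P (Fin.last N)

/-- index set of the `n(N+1)`-dimensional controller state space -/
abbrev CtrIx {N : ℕ} (nd : Fin (N+1) → ℕ) : Type := Fin (N+1) × Idx nd

/-- index set of the `n(N+2)`-dimensional closed-loop state space:
`N+1` controller blocks and one plant block -/
abbrev BigIx {N : ℕ} (nd : Fin (N+1) → ℕ) : Type := CtrIx nd ⊕ Idx nd

/-- the incidence matrix `ζ` -/
def zetaN (nd : Fin (N+1) → ℕ) : Matrix (CtrIx nd) (CtrIx nd) ℝ :=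
  Matrix.of fun x y => if y.1 ≤ x.1 ∧ x.2 = y.2 then 1 else 0

/-- block diagonal matrix -/
def blkDiagN {nd : Fin (N+1) → ℕ} (f : Fin (N+1) → Matrix (Idx nd) (Idx nd) ℝ) :
    Matrix (CtrIx nd) (CtrIx nd) ℝ :=
  Matrix.of fun x y => if x.1 = y.1 then f x.1 x.2 y.2 else 0

/-- `A_K` of the optimal controller realization -/
def AK (K : KGains P) (L : LGains P) : Matrix (CtrIx P.nd) (CtrIx P.nd) ℝ :=
  blkDiagN (fun _ => P.A) + blkDiagN (fun k => L k * Cup P k) +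
    zetaN P.nd * blkDiagN (fun k => Bdown P k * K k) * (zetaN P.nd)⁻¹

/-- `B_K` of the optimal controller realization -/
def BK (L : LGains P) : Matrix (CtrIx P.nd) (Idx P.pd) ℝ :=
  Matrix.of fun x c => -((L x.1 * (padLe P.pd x.1)ᵀ) x.2 c)

/-- `C_K` of the optimal controller realization -/
def CK (K : KGains P) : Matrix (Idx P.md) (CtrIx P.nd) ℝ :=
  (Matrix.of fun rr (x : CtrIx P.nd) => (padGe P.md x.1 * K x.1) rr x.2) * (zetaN P.nd)⁻¹

/-- closed-loop `𝒜` -/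
def Acal (K : KGains P) (L : LGains P) : Matrix (BigIx P.nd) (BigIx P.nd) ℝ :=
  Matrix.fromBlocks (AK P K L) (BK P L * P.C) (P.B * CK P K) P.A

/-- closed-loop `ℬ` -/
def Bcal : Matrix (BigIx P.nd) (Idx P.md) ℝ :=
  Matrix.of fun x j => Sum.elim (fun _ => (0:ℝ)) (fun a => P.B a j) x

/-- closed-loop `𝒲` -/
def Wcal (L : LGains P) : Matrix (BigIx P.nd) (Fin P.r) ℝ :=
  Matrix.of fun x j => Sum.elim (fun y => (BK P L * P.V) y j) (fun a => P.W a j) x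

/-- closed-loop `ℱ` -/
def Fcal (K : KGains P) : Matrix (Fin P.q) (BigIx P.nd) ℝ :=
  Matrix.of fun i x => Sum.elim (fun y => (P.H * CK P K) i y) (fun a => P.F i a) x

/-- closed-loop `𝒞` -/
def Ccal : Matrix (Idx P.pd) (BigIx P.nd) ℝ :=
  Matrix.of fun i x => Sum.elim (fun _ => (0:ℝ)) (fun a => P.C i a) x

/-- block index of a closed-loop index -/
def blkOf {nd : Fin (N+1) → ℕ} (x : BigIx nd) : Fin (N+2) :=
  Sum.elim (fun y => y.1.castSucc) (fun _ => Fin.last (N+1)) x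

/-- within-block state of a closed-loop index -/
def stOf {nd : Fin (N+1) → ℕ} (x : BigIx nd) : Idx nd :=
  Sum.elim Prod.snd id x

/-- the incidence matrix `ζ̄` of the `(N+2)`-fold block structure -/
def zetaBar (nd : Fin (N+1) → ℕ) : Matrix (BigIx nd) (BigIx nd) ℝ :=
  Matrix.of fun x y => if blkOf y ≤ blkOf x ∧ stOf x = stOf y then 1 else 0

/-- embedding of a within-block index into the closed-loop index set, at block `k` -/
def emb {nd : Fin (N+1) → ℕ} (k : Fin (N+2)) (a : Idx nd) : BigIx nd :=
  if h : k.1 < N + 1 then Sum.inl (⟨⟨k.1, h⟩, a⟩ : CtrIx nd) else Sum.inr a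

/-- `𝒦_i` of the paper (eq. (9)). -/
def Kcal (K : KGains P) (i : Fin (N+1)) : Matrix (IdxGe P.md i) (BigIx P.nd) ℝ :=
  (padGe P.md i)ᵀ *
    Matrix.of fun (rr : Idx P.md) (x : BigIx P.nd) =>
      Sum.elim
        (fun y : CtrIx P.nd =>
          if hl : y.1.1 < N then
            (if y.1 < i then (0:ℝ)
             else
               have h1 : y.1.1 + 1 < N + 1 := by omega
               (padGe P.md ⟨y.1.1 + 1, h1⟩ * K ⟨y.1.1 + 1, h1⟩ -
                   padGe P.md y.1 * K y.1) rr y.2)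
          else (-(padGe P.md (Fin.last N) * K (Fin.last N))) rr y.2)
        (fun a => (padGe P.md i * K i) rr a) x

/-- `ℒ_j` of the paper (eq. (10)). -/
def Lcal (L : LGains P) (j : Fin (N+1)) : Matrix (BigIx P.nd) (IdxLe P.pd j) ℝ :=
  Matrix.of fun x c =>
    Sum.elim
      (fun y : CtrIx P.nd =>
        if y.1 < j then (L y.1 * (padLe P.pd y.1)ᵀ * padLe P.pd j) y.2 c else (L j) y.2 c)
      (fun a => (L j) a c) x

/-- `J̃_i` of the paper (eq. (11)). -/
def Jtil (nd : Fin (N+1) → ℕ) (i : Fin (N+1)) : Matrix (Idx nd) (BigIx nd) ℝ :=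
  Matrix.of fun a x =>
    Sum.elim
      (fun y : CtrIx nd => if 0 < i.1 ∧ y.1.1 = i.1 - 1 ∧ a = y.2 then (1:ℝ) else 0)
      (fun b => if a = b then (-1:ℝ) else 0) x

/-- `Ĵ_j` of the paper (eq. (11)). -/
def Jhat (nd : Fin (N+1) → ℕ) (j : Fin (N+1)) : Matrix (BigIx nd) (Idx nd) ℝ :=
  Matrix.of fun x a =>
    Sum.elim
      (fun y : CtrIx nd => if j < y.1 ∧ y.2 = a then (1:ℝ) else 0)
      (fun b => if b = a then (1:ℝ) else 0) x

/-- `Γ_i = −(Ψ_{↓i}^{↓i})^{1/2} 𝒦_i` for `i ≥ 1` (Lemma 2 of the paper). -/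
def Gam (K : KGains P) (i : Fin (N+1)) : Matrix (IdxGe P.md i) (BigIx P.nd) ℝ :=
  -(msqrt (Psidd P i) * Kcal P K i)

/-- `Λ_j = −ℒ_j (Φ_{↑j}^{↑j})^{1/2}` for `j ≤ N` (Lemma 2 of the paper). -/
def Lam (L : LGains P) (j : Fin (N+1)) : Matrix (BigIx P.nd) (IdxLe P.pd j) ℝ :=
  -(Lcal P L j * msqrt (Phiuu P j))

/-- the inner factor `U_1(s)` -/
def Uone (K : KGains P) (L : LGains P) (s : ℂ) : Matrix (Fin P.q) (IdxGe P.md 0) ℂ :=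
  mc (P.F + Hdown P 0 * K 0) * (s • 1 - mc (AKL P K L 0))⁻¹ * mc (Bdown P 0) *
      (mc (msqrt (Psidd P 0)))⁻¹ +
    mc (Hdown P 0) * (mc (msqrt (Psidd P 0)))⁻¹

/-- the inner factor `U_{t+2}(s)` (paper indexing), mapping block level `t+1` to `t` -/
def Usucc (K : KGains P) (L : LGains P) (t : Fin N) (s : ℂ) :
    Matrix (IdxGe P.md t.castSucc) (IdxGe P.md t.succ) ℂ :=
  mc (msqrt (Psidd P t.castSucc)) *
      mc ((padGe P.md t.castSucc)ᵀ *
        (padGe P.md t.succ * K t.succ - padGe P.md t.castSucc * K t.castSucc)) *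
      (s • 1 - mc (AKL P K L t.succ.castSucc))⁻¹ * mc (Bdown P t.succ) *
      (mc (msqrt (Psidd P t.succ)))⁻¹ +
    mc (msqrt (Psidd P t.castSucc)) * mc ((padGe P.md t.castSucc)ᵀ * padGe P.md t.succ) *
      (mc (msqrt (Psidd P t.succ)))⁻¹

/-- the co-inner factor `V_{N+1}(s)` (paper indexing: the last one) -/
def Vlast (K : KGains P) (L : LGains P) (s : ℂ) :
    Matrix (IdxLe P.pd (Fin.last N)) (Fin P.r) ℂ :=
  (mc (msqrt (Phiuu P (Fin.last N))))⁻¹ * mc (Cup P (Fin.last N)) *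
      (s • 1 - mc (AKL P K L (Fin.last (N+1))))⁻¹ *
      mc (P.W + L (Fin.last N) * Vup P (Fin.last N)) +
    (mc (msqrt (Phiuu P (Fin.last N))))⁻¹ * mc (Vup P (Fin.last N))

/-- the co-inner factor `V_{t+1}(s)` (paper indexing), for `t+1 ≤ N` -/
def Vmid (K : KGains P) (L : LGains P) (t : Fin N) (s : ℂ) :
    Matrix (IdxLe P.pd t.castSucc) (IdxLe P.pd t.succ) ℂ :=
  (mc (msqrt (Phiuu P t.castSucc)))⁻¹ * mc (Cup P t.castSucc) *
      (s • 1 - mc (AKL P K L t.succ.castSucc))⁻¹ *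
      mc ((L t.castSucc * (padLe P.pd t.castSucc)ᵀ - L t.succ * (padLe P.pd t.succ)ᵀ) *
        padLe P.pd t.succ * msqrt (Phiuu P t.succ)) +
    (mc (msqrt (Phiuu P t.castSucc)))⁻¹ *
      mc ((padLe P.pd t.castSucc)ᵀ * padLe P.pd t.succ * msqrt (Phiuu P t.succ))

/-- the product `U_1(s) U_2(s) ⋯ U_i(s)` -/
def Uprod (K : KGains P) (L : LGains P) (s : ℂ) :
    (i : Fin (N+1)) → Matrix (Fin P.q) (IdxGe P.md i) ℂ :=
  Fin.induction (motive := fun i => Matrix (Fin P.q) (IdxGe P.md i) ℂ)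
    (Uone P K L s) (fun t ih => ih * Usucc P K L t s)

/-- the product `V_j(s) V_{j+1}(s) ⋯ V_{N+1}(s)` -/
def Vprod (K : KGains P) (L : LGains P) (s : ℂ) :
    (j : Fin (N+1)) → Matrix (IdxLe P.pd j) (Fin P.r) ℂ :=
  Fin.reverseInduction (motive := fun j => Matrix (IdxLe P.pd j) (Fin P.r) ℂ)
    (Vlast P K L s) (fun t ih => Vmid P K L t s * ih)

/-- closed-loop transfer function `G11(s) = ℱ(sI−𝒜)⁻¹𝒲` -/
def G11 (K : KGains P) (L : LGains P) (s : ℂ) : Matrix (Fin P.q) (Fin P.r) ℂ :=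
  mc (Fcal P K) * (s • 1 - mc (Acal P K L))⁻¹ * mc (Wcal P L)

/-- closed-loop transfer function `G12(s) = ℱ(sI−𝒜)⁻¹ℬ + H` -/
def G12 (K : KGains P) (L : LGains P) (s : ℂ) : Matrix (Fin P.q) (Idx P.md) ℂ :=
  mc (Fcal P K) * (s • 1 - mc (Acal P K L))⁻¹ * mc (Bcal P) + mc P.H

/-- closed-loop transfer function `G21(s) = 𝒞(sI−𝒜)⁻¹𝒲 + V` -/
def G21 (K : KGains P) (L : LGains P) (s : ℂ) : Matrix (Idx P.pd) (Fin P.r) ℂ :=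
  mc (Ccal P) * (s • 1 - mc (Acal P K L))⁻¹ * mc (Wcal P L) + mc P.V

end

end TriLQG

namespace TriLQG

section StmtThreeAux

open TriAux

variable {N : ℕ}

/-- lift an `(N+1)`-block matrix of `n×n` blocks to the controller index set -/
def liftC (nd : Fin (N+1) → ℕ)
    (M : Matrix (Fin (N+1)) (Fin (N+1)) (Matrix (Idx nd) (Idx nd) ℝ)) :
    Matrix (CtrIx nd) (CtrIx nd) ℝ :=
  Matrix.of fun x y => M x.1 y.1 x.2 y.2

/-- lift an `(N+2)`-block matrix of `n×n` blocks to the closed-loop index set -/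
def liftB (nd : Fin (N+1) → ℕ)
    (M : Matrix (Fin (N+2)) (Fin (N+2)) (Matrix (Idx nd) (Idx nd) ℝ)) :
    Matrix (BigIx nd) (BigIx nd) ℝ :=
  Matrix.of fun x y => M (blkOf x) (blkOf y) (stOf x) (stOf y)

variable {nd : Fin (N+1) → ℕ}

lemma liftC_add (M M' : Matrix (Fin (N+1)) (Fin (N+1)) (Matrix (Idx nd) (Idx nd) ℝ)) :
    liftC nd (M + M') = liftC nd M + liftC nd M' := by
  ext x y
  simp [liftC]

lemma liftC_mul (M M' : Matrix (Fin (N+1)) (Fin (N+1)) (Matrix (Idx nd) (Idx nd) ℝ)) :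
    liftC nd (M * M') = liftC nd M * liftC nd M' := by
  ext x y
  simp only [liftC, Matrix.of_apply, Matrix.mul_apply, Matrix.sum_apply,
    Fintype.sum_prod_type]

lemma liftC_one : liftC nd 1 = 1 := by
  ext x y
  simp only [liftC, Matrix.of_apply, Matrix.one_apply]
  rw [apply_ite (fun m : Matrix (Idx nd) (Idx nd) ℝ => m x.2 y.2)]
  simp only [Matrix.one_apply, Matrix.zero_apply, Prod.ext_iff]
  split_ifs <;> first | rfl | tauto

lemma sum_bigIx {M₀ : Type*} [AddCommMonoid M₀] (f : Fin (N+2) → Idx nd → M₀) :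
    (∑ y : BigIx nd, f (blkOf y) (stOf y)) = ∑ j, ∑ b, f j b := by
  rw [Fintype.sum_sum_type, Fin.sum_univ_castSucc (f := fun j => ∑ b, f j b)]
  simp only [blkOf, stOf, Sum.elim_inl, Sum.elim_inr]
  rw [Fintype.sum_prod_type]
  rfl

lemma liftB_mul (M M' : Matrix (Fin (N+2)) (Fin (N+2)) (Matrix (Idx nd) (Idx nd) ℝ)) :
    liftB nd (M * M') = liftB nd M * liftB nd M' := by
  ext x y
  have h : (liftB nd M * liftB nd M') x y =
      ∑ j, ∑ b, M (blkOf x) j (stOf x) b * M' j (blkOf y) b (stOf y) := by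
    rw [Matrix.mul_apply]
    simp only [liftB, Matrix.of_apply]
    exact sum_bigIx (fun j b => M (blkOf x) j (stOf x) b * M' j (blkOf y) b (stOf y))
  rw [h]
  simp only [liftB, Matrix.of_apply, Matrix.mul_apply, Matrix.sum_apply]

lemma liftB_one : liftB nd 1 = 1 := by
  ext x y
  simp only [liftB, Matrix.of_apply, Matrix.one_apply]
  rw [apply_ite (fun m : Matrix (Idx nd) (Idx nd) ℝ => m (stOf x) (stOf y))]
  simp only [Matrix.one_apply, Matrix.zero_apply]
  cases x with
  | inl x =>
    cases y with
    | inl y =>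
      simp only [blkOf, stOf, Sum.elim_inl]
      simp only [Fin.castSucc_inj, Sum.inl.injEq, Prod.ext_iff]
      split_ifs <;> simp_all
    | inr b =>
      simp only [blkOf, stOf, Sum.elim_inl, Sum.elim_inr]
      exact (if_neg (Fin.castSucc_lt_last _).ne).trans (if_neg (show Sum.inl x ≠ Sum.inr b by simp)).symm
  | inr a =>
    cases y with
    | inl y =>
      simp only [blkOf, stOf, Sum.elim_inl, Sum.elim_inr]
      exact (if_neg (Fin.castSucc_lt_last _).ne').trans (if_neg (show Sum.inr a ≠ Sum.inl y by simp)).symm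
    | inr b =>
      simp [blkOf, stOf]
      exact if_congr Iff.rfl rfl rfl

lemma blkOf_emb (k : Fin (N+2)) (a : Idx nd) : blkOf (emb k a : BigIx nd) = k := by
  rw [emb]
  split
  · next h =>
    simp only [blkOf, Sum.elim_inl]
    exact Fin.ext rfl
  · next h =>
    simp only [blkOf, Sum.elim_inr]
    exact Fin.ext (by have := k.2; simp only [Fin.val_last]; omega)

lemma stOf_emb (k : Fin (N+2)) (a : Idx nd) : stOf (emb k a : BigIx nd) = a := by
  rw [emb]; split <;> rfl

lemma liftB_apply_emb (M : Matrix (Fin (N+2)) (Fin (N+2)) (Matrix (Idx nd) (Idx nd) ℝ))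
    (k l : Fin (N+2)) (a b : Idx nd) :
    liftB nd M (emb k a) (emb l b) = M k l a b := by
  simp only [liftB, Matrix.of_apply, blkOf_emb, stOf_emb]

variable (P : Plant N) (K : KGains P) (L : LGains P)

/-- `B^{↓t} K_t` extended to natural indices -/
def DnM (t : ℕ) : Matrix (Idx P.nd) (Idx P.nd) ℝ :=
  if h : t < N+1 then Bdown P ⟨t, h⟩ * K ⟨t, h⟩ else 0

/-- `L_t C_{↑t}` extended to natural indices -/
def GnM (t : ℕ) : Matrix (Idx P.nd) (Idx P.nd) ℝ :=
  if h : t < N+1 then L ⟨t, h⟩ * Cup P ⟨t, h⟩ else 0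

lemma GnM_hi : GnM P L (N+1) = 0 := dif_neg (by omega)
lemma DnM_hi : DnM P K (N+1) = 0 := dif_neg (by omega)

/-- the closed-loop matrix `𝒜` in `(N+2)`-block form -/
def AbM : Matrix (Fin (N+2)) (Fin (N+2)) (Matrix (Idx P.nd) (Idx P.nd) ℝ) :=
  Matrix.of fun k l =>
    (if k = l then P.A + GnM P L k.1 + DnM P K k.1 else 0) +
    (if l.1 < k.1 then DnM P K l.1 - DnM P K (l.1 + 1) else 0) +
    (if k.1 < l.1 ∧ l.1 = N+1 then -(GnM P L k.1) else 0)

lemma B_padGe (i : Fin (N+1)) : P.B * padGe P.md i = Bdown P i := by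
  ext a c
  rw [Matrix.mul_apply]
  simp only [padGe, Matrix.of_apply, mul_ite, mul_one, mul_zero]
  rw [Finset.sum_ite_eq' Finset.univ (c : Idx P.md) (fun s => P.B a s)]
  simp [Bdown]

lemma padLeT_C (i : Fin (N+1)) : (padLe P.pd i)ᵀ * P.C = Cup P i := by
  ext c b
  rw [Matrix.mul_apply]
  simp only [Matrix.transpose_apply, padLe, Matrix.of_apply, ite_mul, one_mul, zero_mul]
  rw [Finset.sum_ite_eq' Finset.univ (c : Idx P.pd) (fun s => P.C s b)]
  simp [Cup]

lemma zetaN_eq : zetaN P.nd = liftC P.nd (Zm (Matrix (Idx P.nd) (Idx P.nd) ℝ) (N+1)) := by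
  ext x y
  simp only [zetaN, liftC, Zm, Matrix.of_apply]
  rw [apply_ite (fun m : Matrix (Idx P.nd) (Idx P.nd) ℝ => m x.2 y.2)]
  simp only [Matrix.one_apply, Matrix.zero_apply]
  split_ifs <;> first | rfl | tauto

lemma zetaN_inv : (zetaN P.nd)⁻¹ = liftC P.nd (Mm (Matrix (Idx P.nd) (Idx P.nd) ℝ) (N+1)) :=
  Matrix.inv_eq_right_inv (by rw [zetaN_eq, ← liftC_mul, Zm_mul_Mm, liftC_one])

lemma zetaBar_eq : zetaBar P.nd = liftB P.nd (Zm (Matrix (Idx P.nd) (Idx P.nd) ℝ) (N+2)) := by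
  ext x y
  simp only [zetaBar, liftB, Zm, Matrix.of_apply]
  rw [apply_ite (fun m : Matrix (Idx P.nd) (Idx P.nd) ℝ => m (stOf x) (stOf y))]
  simp only [Matrix.one_apply, Matrix.zero_apply]
  split_ifs <;> first | rfl | tauto

lemma zetaBar_inv :
    (zetaBar P.nd)⁻¹ = liftB P.nd (Mm (Matrix (Idx P.nd) (Idx P.nd) ℝ) (N+2)) :=
  Matrix.inv_eq_right_inv (by rw [zetaBar_eq, ← liftB_mul, Zm_mul_Mm, liftB_one])

lemma blkDiagN_eq (f : Fin (N+1) → Matrix (Idx P.nd) (Idx P.nd) ℝ) :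
    blkDiagN f = liftC P.nd (Matrix.of fun i j => if i = j then f i else 0) := by
  ext x y
  simp only [blkDiagN, liftC, Matrix.of_apply]
  rw [apply_ite (fun m : Matrix (Idx P.nd) (Idx P.nd) ℝ => m x.2 y.2)]
  simp

/-- `A_K` in `(N+1)`-block form -/
def AKb : Matrix (Fin (N+1)) (Fin (N+1)) (Matrix (Idx P.nd) (Idx P.nd) ℝ) :=
  (Matrix.of fun i j => if i = j then P.A else 0) +
    (Matrix.of fun i j => if i = j then L i * Cup P i else 0) +
    Zm (Matrix (Idx P.nd) (Idx P.nd) ℝ) (N+1) *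
      (Matrix.of fun i j => if i = j then Bdown P i * K i else 0) *
      Mm (Matrix (Idx P.nd) (Idx P.nd) ℝ) (N+1)

lemma AK_eq : AK P K L = liftC P.nd (AKb P K L) := by
  rw [AK, blkDiagN_eq, blkDiagN_eq P (fun k => L k * Cup P k),
    blkDiagN_eq P (fun k => Bdown P k * K k), zetaN_inv, zetaN_eq,
    ← liftC_mul, ← liftC_mul, ← liftC_add, ← liftC_add, AKb]

lemma AK_entry (i j : Fin (N+1)) :
    AKb P K L i j = AbM P K L i.castSucc j.castSucc := by
  rw [AKb]
  have hD : ∀ m : Fin (N+1), Bdown P m * K m = DnM P K m.1 := by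
    intro m; simp [DnM, m.2]
  have hG : ∀ m : Fin (N+1), L m * Cup P m = GnM P L m.1 := by
    intro m; simp [GnM, m.2]
  rw [Matrix.add_apply, Matrix.add_apply, Z_dg_M]
  simp only [Matrix.of_apply]
  have hdd : (if h : j.1 + 1 < N+1 then
        (if j.1 + 1 ≤ i.1 then Bdown P ⟨j.1+1, h⟩ * K ⟨j.1+1, h⟩ else 0) else 0)
      = if j.1 + 1 ≤ i.1 then DnM P K (j.1+1) else 0 := by
    split
    · next h => rw [DnM, dif_pos h]
    · next h =>
      rw [if_neg (show ¬ j.1+1 ≤ i.1 from by have := i.2; omega)]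
  rw [hdd, hD j, hG i]
  simp only [AbM, Matrix.of_apply, Fin.coe_castSucc, Fin.castSucc_inj]
  by_cases hij : i = j
  · subst hij
    rw [if_pos rfl, if_pos rfl, if_pos rfl, if_pos (le_refl i),
      if_neg (show ¬ i.1 + 1 ≤ i.1 from by omega),
      if_neg (show ¬ i.1 < i.1 from by omega),
      if_neg (show ¬ (i.1 < i.1 ∧ i.1 = N+1) from by omega)]
    abel
  · have hij' : i.1 ≠ j.1 := fun hh => hij (Fin.ext hh)
    rw [if_neg hij, if_neg hij, if_neg hij]
    rcases lt_or_gt_of_ne hij' with hlt | hgt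
    · rw [if_neg (show ¬ j ≤ i from by rw [Fin.le_def]; omega),
        if_neg (show ¬ j.1 + 1 ≤ i.1 from by omega),
        if_neg (show ¬ j.1 < i.1 from by omega),
        if_neg (show ¬ (i.1 < j.1 ∧ j.1 = N+1) from by have := j.2; omega)]
      abel
    · rw [if_pos (show j ≤ i from by rw [Fin.le_def]; omega),
        if_pos (show j.1 + 1 ≤ i.1 from by omega),
        if_pos (show j.1 < i.1 from hgt),
        if_neg (show ¬ (i.1 < j.1 ∧ j.1 = N+1) from by omega)]
      abel

lemma Acal_eq : Acal P K L = liftB P.nd (AbM P K L) := by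
  ext x y
  cases x with
  | inl x =>
    cases y with
    | inl y =>
      simp only [Acal, Matrix.fromBlocks_apply₁₁]
      rw [AK_eq]
      simp only [liftC, liftB, Matrix.of_apply, blkOf, stOf, Sum.elim_inl]
      rw [AK_entry P K L x.1 y.1]
    | inr b =>
      simp only [Acal, Matrix.fromBlocks_apply₁₂]
      rw [Matrix.mul_apply]
      simp only [BK, Matrix.of_apply, neg_mul]
      rw [Finset.sum_neg_distrib]
      rw [show (∑ c, (L x.1 * (padLe P.pd x.1)ᵀ) x.2 c * P.C c b)
          = ((L x.1 * (padLe P.pd x.1)ᵀ) * P.C) x.2 b from (Matrix.mul_apply).symm]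
      rw [Matrix.mul_assoc, padLeT_C]
      have hx := x.1.2
      have hGn : GnM P L x.1.1 = L x.1 * Cup P x.1 := by simp [GnM, x.1.2]
      have hAb : AbM P K L (Fin.castSucc x.1) (Fin.last (N+1)) = -(GnM P L x.1.1) := by
        simp only [AbM, Matrix.of_apply, Fin.coe_castSucc, Fin.val_last]
        rw [if_neg (Fin.castSucc_lt_last x.1).ne,
          if_neg (show ¬ (N+1:ℕ) < x.1.1 from by omega)]
        simp [hx]
      simp only [liftB, Matrix.of_apply, blkOf, stOf, Sum.elim_inl, Sum.elim_inr]
      rw [hAb, hGn]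
      simp [Matrix.neg_apply]
  | inr a =>
    cases y with
    | inl y =>
      simp only [Acal, Matrix.fromBlocks_apply₂₁]
      rw [CK, ← Matrix.mul_assoc]
      have hBQ : P.B * (Matrix.of fun rr (x : CtrIx P.nd) => (padGe P.md x.1 * K x.1) rr x.2)
          = Matrix.of fun a (x : CtrIx P.nd) => (Bdown P x.1 * K x.1) a x.2 := by
        ext a' x
        rw [Matrix.of_apply, Matrix.mul_apply]
        rw [show (∑ rr, P.B a' rr * (Matrix.of fun rr (x : CtrIx P.nd) =>
              (padGe P.md x.1 * K x.1) rr x.2) rr x)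
            = (P.B * (padGe P.md x.1 * K x.1)) a' x.2 from (Matrix.mul_apply).symm]
        rw [← Matrix.mul_assoc, B_padGe]
      rw [hBQ, zetaN_inv]
      rw [Matrix.mul_apply]
      simp only [Matrix.of_apply, liftC]
      rw [Fintype.sum_prod_type]
      have h1 : ∀ l : Fin (N+1),
          (∑ c, (Bdown P l * K l) a c *
            Mm (Matrix (Idx P.nd) (Idx P.nd) ℝ) (N+1) l y.1 c y.2)
          = ((Bdown P l * K l) * Mm (Matrix (Idx P.nd) (Idx P.nd) ℝ) (N+1) l y.1) a y.2 :=
        fun l => (Matrix.mul_apply).symm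
      rw [Finset.sum_congr rfl fun l _ => h1 l,
        ← Matrix.sum_apply a y.2 Finset.univ
          (fun l => (Bdown P l * K l) * Mm (Matrix (Idx P.nd) (Idx P.nd) ℝ) (N+1) l y.1),
        mul_Mm (f := fun l => Bdown P l * K l) y.1]
      have hy := y.1.2
      have hDn1 : Bdown P y.1 * K y.1 = DnM P K y.1.1 := by simp [DnM, y.1.2]
      have hDn2 : (if h : y.1.1+1 < N+1 then Bdown P ⟨y.1.1+1, h⟩ * K ⟨y.1.1+1, h⟩ else 0)
          = DnM P K (y.1.1+1) := rfl
      rw [hDn1, hDn2]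
      simp only [liftB, Matrix.of_apply, blkOf, stOf, Sum.elim_inl, Sum.elim_inr, AbM,
        Fin.ext_iff, Fin.coe_castSucc, Fin.val_last]
      show (DnM P K y.1.1 - DnM P K (y.1.1+1)) a y.2 =
        (((if N + 1 = y.1.1 then P.A + GnM P L (N + 1) + DnM P K (N + 1) else 0) +
          (if y.1.1 < N + 1 then DnM P K y.1.1 - DnM P K (y.1.1 + 1) else 0)) +
          (if N + 1 < y.1.1 ∧ y.1.1 = N + 1 then -GnM P L (N + 1) else 0)) a y.2
      rw [if_neg (show ¬ N+1 = y.1.1 from by omega),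
        if_pos (show y.1.1 < N+1 from hy),
        if_neg (show ¬ (N+1 < y.1.1 ∧ y.1.1 = N+1) from by omega)]
      rw [zero_add, add_zero]
    | inr b =>
      simp only [Acal, Matrix.fromBlocks_apply₂₂]
      have hAb : AbM P K L (Fin.last (N+1)) (Fin.last (N+1)) = P.A := by
        simp only [AbM, Matrix.of_apply, Fin.val_last, GnM_hi, DnM_hi]
        simp
      simp only [liftB, Matrix.of_apply, blkOf, stOf, Sum.elim_inr]
      rw [hAb]
      rfl

set_option maxHeartbeats 1600000 in
lemma S_eq (k l : Fin (N+2)) :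
    (∑ j, if l ≤ j then AbM P K L k j else 0) =
      (if l ≤ k then P.A + GnM P L k.1 + DnM P K k.1 else 0) +
      (if l.1 ≤ k.1 then DnM P K l.1 - DnM P K k.1 else 0) +
      (if k.1 < N+1 then -(GnM P L k.1) else 0) := by
  have split1 : ∀ j : Fin (N+2), (if l ≤ j then AbM P K L k j else 0) =
      (if j = k then (if l ≤ j then P.A + GnM P L k.1 + DnM P K k.1 else 0) else 0) +
      (if l.1 ≤ j.1 ∧ j.1 < k.1 then DnM P K j.1 - DnM P K (j.1+1) else 0) +
      (if j.1 = N+1 then (if k.1 < j.1 ∧ l.1 ≤ j.1 then -(GnM P L k.1) else 0) else 0) := by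
    intro j
    simp only [AbM, Matrix.of_apply, Fin.le_def, Fin.ext_iff]
    split_ifs <;> first | (exfalso; omega) | abel
  rw [Finset.sum_congr rfl fun j _ => split1 j, Finset.sum_add_distrib,
    Finset.sum_add_distrib]
  congr 1
  · congr 1
    · rw [sum_ite_eq_univ k
        (fun j => if l ≤ j then P.A + GnM P L k.1 + DnM P K k.1 else 0)]
    · by_cases hlk : l.1 ≤ k.1
      · have hsub : Finset.Ico l.1 k.1 ⊆ Finset.range (N+2) := by
          intro m hm
          rw [Finset.mem_range]
          rw [Finset.mem_Ico] at hm
          have := k.2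
          omega
        rw [show (∑ j : Fin (N+2), if l.1 ≤ j.1 ∧ j.1 < k.1 then
              DnM P K j.1 - DnM P K (j.1+1) else 0)
            = ∑ m ∈ Finset.range (N+2), (if l.1 ≤ m ∧ m < k.1 then
              DnM P K m - DnM P K (m+1) else 0)
          from Fin.sum_univ_eq_sum_range
            (fun m => if l.1 ≤ m ∧ m < k.1 then DnM P K m - DnM P K (m+1) else 0) (N+2)]
        have h2 : ∀ m ∈ Finset.range (N+2),
            (if l.1 ≤ m ∧ m < k.1 then DnM P K m - DnM P K (m+1) else 0)
            = if m ∈ Finset.Ico l.1 k.1 then DnM P K m - DnM P K (m+1) else 0 := by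
          intro m _
          simp only [Finset.mem_Ico]
        rw [Finset.sum_congr rfl h2, Finset.sum_ite_mem,
          Finset.inter_eq_right.mpr hsub, telescope _ _ _ hlk, if_pos hlk]
      · rw [if_neg hlk]
        apply Finset.sum_eq_zero
        intro j _
        rw [if_neg]
        omega
  · rw [sum_ite_val (N+1)
      (fun j : Fin (N+2) => if k.1 < j.1 ∧ l.1 ≤ j.1 then -(GnM P L k.1) else 0),
      dif_pos (show N+1 < N+2 from by omega)]
    exact if_congr ⟨fun hh => hh.1, fun hh => ⟨hh, Nat.lt_succ_iff.mp l.2⟩⟩ rfl rfl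

lemma final_eq (k l : Fin (N+2)) :
    (Mm (Matrix (Idx P.nd) (Idx P.nd) ℝ) (N+2) * AbM P K L *
        Zm (Matrix (Idx P.nd) (Idx P.nd) ℝ) (N+2)) k l =
      (∑ j, if l ≤ j then AbM P K L k j else 0) -
      (if 0 < k.1 then
        (∑ j, if l ≤ j then
          AbM P K L ⟨k.1 - 1, lt_of_le_of_lt (Nat.sub_le _ _) k.2⟩ j else 0) else 0) := by
  rw [Matrix.mul_apply]
  have hz : ∀ j : Fin (N+2),
      (Mm (Matrix (Idx P.nd) (Idx P.nd) ℝ) (N+2) * AbM P K L) k j *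
        Zm (Matrix (Idx P.nd) (Idx P.nd) ℝ) (N+2) j l =
      (if l ≤ j then AbM P K L k j else 0) -
      (if l ≤ j then (if 0 < k.1 then
        AbM P K L ⟨k.1 - 1, lt_of_le_of_lt (Nat.sub_le _ _) k.2⟩ j else 0) else 0) := by
    intro j
    rw [Matrix.mul_apply, Mm_mul (f := fun i => AbM P K L i j) k]
    simp only [Zm, Matrix.of_apply]
    split_ifs <;> simp
  rw [Finset.sum_congr rfl fun j _ => hz j, Finset.sum_sub_distrib]
  congr 1
  by_cases h0 : 0 < k.1
  · simp [h0]
  · simp [h0]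

lemma key_lt {k l : Fin (N+2)} (h : l < k) :
    (Mm (Matrix (Idx P.nd) (Idx P.nd) ℝ) (N+2) * AbM P K L *
      Zm (Matrix (Idx P.nd) (Idx P.nd) ℝ) (N+2)) k l = 0 := by
  have hlk : l.1 < k.1 := h
  have h0 : 0 < k.1 := by omega
  have hk2 := k.2
  rw [final_eq, if_pos h0, S_eq, S_eq]
  have hkm : (⟨k.1 - 1, lt_of_le_of_lt (Nat.sub_le _ _) k.2⟩ : Fin (N+2)).1 = k.1 - 1 := rfl
  simp only [Fin.le_def, hkm]
  by_cases hk : k.1 < N+1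
  · split_ifs <;> first | (exfalso; omega) | abel
  · have hGk : GnM P L k.1 = 0 := by
      rw [show k.1 = N+1 from by omega]
      exact GnM_hi P L
    rw [hGk]
    split_ifs <;> first | (exfalso; omega) | abel

lemma key_diag (k : Fin (N+2)) :
    (Mm (Matrix (Idx P.nd) (Idx P.nd) ℝ) (N+2) * AbM P K L *
      Zm (Matrix (Idx P.nd) (Idx P.nd) ℝ) (N+2)) k k = AKL P K L k := by
  have hk2 := k.2
  rw [final_eq]
  by_cases h0 : 0 < k.1
  · rw [if_pos h0, S_eq, S_eq]
    have hkm : (⟨k.1 - 1, lt_of_le_of_lt (Nat.sub_le _ _) k.2⟩ : Fin (N+2)).1 = k.1 - 1 := rfl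
    simp only [Fin.le_def, hkm]
    rw [if_pos (le_refl k.1), if_pos (le_refl k.1),
      if_neg (show ¬ k.1 ≤ k.1 - 1 from by omega),
      if_neg (show ¬ k.1 ≤ k.1 - 1 from by omega),
      if_pos (show k.1 - 1 < N+1 from by omega)]
    by_cases hk : k.1 < N+1
    · rw [if_pos hk]
      have hAKL : AKL P K L k = P.A + DnM P K k.1 + GnM P L (k.1 - 1) := by
        simp only [AKL, DnM, GnM]
        rw [dif_pos hk, if_neg (show ¬ k.1 = 0 from by omega), dif_pos hk,
          dif_pos (show k.1 - 1 < N+1 from by omega)]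
      rw [hAKL]
      abel
    · rw [if_neg hk]
      have hAKL : AKL P K L k = P.A + GnM P L (k.1 - 1) := by
        simp only [AKL]
        rw [dif_neg hk, show k.1 - 1 = N from by omega,
          show GnM P L N = L ⟨N, Nat.lt_succ_self N⟩ * Cup P ⟨N, Nat.lt_succ_self N⟩ from
            dif_pos (Nat.lt_succ_self N)]
        rfl
      rw [hAKL]
      have hGk : GnM P L k.1 = 0 := by
        rw [show k.1 = N+1 from by omega]; exact GnM_hi P L
      have hDk : DnM P K k.1 = 0 := by
        rw [show k.1 = N+1 from by omega]; exact DnM_hi P K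
      rw [hGk, hDk]
      abel
  · rw [if_neg h0, sub_zero, S_eq]
    simp only [Fin.le_def]
    rw [if_pos (le_refl k.1), if_pos (le_refl k.1),
      if_pos (show k.1 < N+1 from by omega)]
    have hAKL : AKL P K L k = P.A + DnM P K k.1 := by
      have h00 : k.1 = 0 := by omega
      have hlt : k.1 < N+1 := by omega
      simp only [AKL, DnM]
      rw [dif_pos hlt, if_pos h00, dif_pos hlt,
        show (⟨k.1, hlt⟩ : Fin (N+1)) = 0 from Fin.ext (by simpa using h00)]
    rw [hAKL]
    abel

end StmtThreeAux

/-- `μ̄ 𝒜 ζ̄` is block upper triangular with diagonal blocks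
`A^{KL}_{k,k−1}`. -/
theorem stmt3 {N : ℕ} (P : Plant N)
    (hdim : ∀ k : Fin (N+1), 0 < P.nd k ∧ 0 < P.md k ∧ 0 < P.pd k)
    (K : KGains P) (L : LGains P) :
    (∀ k l : Fin (N+2), l < k → ∀ a b : Idx P.nd,
      ((zetaBar P.nd)⁻¹ * Acal P K L * zetaBar P.nd) (emb k a) (emb l b) = 0) ∧
    (∀ k : Fin (N+2), ∀ a b : Idx P.nd,
      ((zetaBar P.nd)⁻¹ * Acal P K L * zetaBar P.nd) (emb k a) (emb k b) =
        AKL P K L k a b) := by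
  constructor
  · intro k l hlt a b
    rw [zetaBar_inv, Acal_eq, zetaBar_eq, ← liftB_mul, ← liftB_mul, liftB_apply_emb,
      key_lt P K L hlt]
    simp
  · intro k a b
    rw [zetaBar_inv, Acal_eq, zetaBar_eq, ← liftB_mul, ← liftB_mul, liftB_apply_emb,
      key_diag P K L k]

end TriLQG
end
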